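/- Let p be a symplectic partition of 2n whose largest part is even and occurs with multiplicity 1, and all of whose other parts are odd (i.e., b_1 even with a_1 = 1, and b_i odd for 2 ≤ i ≤ r). Then ([p_1 p_1 (2n*+1)]^t)_{SO_{2n+1}} = (p^+)_{SO_{2n+1}}, and consequently [p_1 p_1 (2n*+1)]^{SO_{2n+1}} = ((p^t)^+)_{SO_{2n+1}}. (Theorem 4.2(2)(i) of the paper.) -/

import Mathlib

/-!  Basic combinatorics of partitions: transpose, dominance order,
symplectic/orthogonal partitions, collapses and expansions, and the
dimension formulas for nilpotent orbits. -/

/-- `p` is a partition of `N`: a multiset of positive integers summing to `N`. -/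
def IsPartitionOf (N : ℕ) (p : Multiset ℕ) : Prop := p.sum = N ∧ 0 ∉ p

/-- Sum of the `k` largest parts of `p`:
`Σ_{j ≥ 1} min k #{i : p_i ≥ j}`. -/
def psum (p : Multiset ℕ) (k : ℕ) : ℕ :=
  ((Multiset.range p.sum).map (fun j => min k (p.countP (fun a => j + 1 ≤ a)))).sum

/-- Dominance order on partitions: `DomLE p q` means `p ≤ q`, i.e. for every `k`
the sum of the `k` largest parts of `p` is at most that of `q`. -/
def DomLE (p q : Multiset ℕ) : Prop := ∀ k, psum p k ≤ psum q k

/-- The transpose of a partition: its `j`-th part is `#{i : p_i ≥ j}`. -/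
def transpose (p : Multiset ℕ) : Multiset ℕ :=
  (((Multiset.range p.sum).map (fun j => p.countP (fun a => j + 1 ≤ a))).filter (0 < ·))

/-- A partition is symplectic if every odd part occurs with even multiplicity. -/
def IsSymplectic (p : Multiset ℕ) : Prop := ∀ a, Odd a → Even (p.count a)

/-- A partition is orthogonal if every even part occurs with even multiplicity. -/
def IsOrthogonal (p : Multiset ℕ) : Prop := ∀ a, Even a → Even (p.count a)

/-- `q` is the `P`-collapse of `p` (as partitions of `N`): the largest partition of `N`
satisfying `P` which is `≤ p` in the dominance order. -/
def IsCollapseOf (P : Multiset ℕ → Prop) (N : ℕ) (p q : Multiset ℕ) : Prop :=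
  IsPartitionOf N q ∧ P q ∧ DomLE q p ∧
    ∀ q', IsPartitionOf N q' → P q' → DomLE q' p → DomLE q' q

open Classical in
noncomputable def collapseOf (P : Multiset ℕ → Prop) (N : ℕ) (p : Multiset ℕ) : Multiset ℕ :=
  if h : ∃ q, IsCollapseOf P N p q then h.choose else 0

/-- The symplectic collapse `p_{Sp_N}` of a partition `p` of `N` (`N` even). -/
noncomputable def sympCollapse (N : ℕ) (p : Multiset ℕ) : Multiset ℕ :=
  collapseOf IsSymplectic N p

/-- The orthogonal collapse `p_{SO_N}` of a partition `p` of `N`. -/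
noncomputable def orthCollapse (N : ℕ) (p : Multiset ℕ) : Multiset ℕ :=
  collapseOf IsOrthogonal N p

/-- A symplectic partition `p` of `N` is special if `(((p^t)_{Sp_N})^t)_{Sp_N} = p`. -/
def IsSpecialSymp (N : ℕ) (p : Multiset ℕ) : Prop :=
  sympCollapse N (transpose (sympCollapse N (transpose p))) = p

/-- An orthogonal partition `p` of `N` is special if `(((p^t)_{SO_N})^t)_{SO_N} = p`. -/
def IsSpecialOrth (N : ℕ) (p : Multiset ℕ) : Prop :=
  orthCollapse N (transpose (orthCollapse N (transpose p))) = p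

/-- `q` is the `(P, Sp)`-expansion of `p`: the smallest partition of `N` satisfying
`P` and the speciality predicate `Sp` which is `≥ p` in the dominance order. -/
def IsExpansionOf (P Sp : Multiset ℕ → Prop) (N : ℕ) (p q : Multiset ℕ) : Prop :=
  IsPartitionOf N q ∧ P q ∧ Sp q ∧ DomLE p q ∧
    ∀ q', IsPartitionOf N q' → P q' → Sp q' → DomLE p q' → DomLE q q'

open Classical in
noncomputable def expansionOf (P Sp : Multiset ℕ → Prop) (N : ℕ) (p : Multiset ℕ) :
    Multiset ℕ :=
  if h : ∃ q, IsExpansionOf P Sp N p q then h.choose else 0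

/-- The symplectic expansion `p^{Sp_N}`: the smallest special symplectic partition of `N`
which is `≥ p` in the dominance order. -/
noncomputable def sympExpansion (N : ℕ) (p : Multiset ℕ) : Multiset ℕ :=
  expansionOf IsSymplectic (IsSpecialSymp N) N p

/-- The orthogonal expansion `p^{SO_N}`: the smallest special orthogonal partition of `N`
which is `≥ p` in the dominance order. -/
noncomputable def orthExpansion (N : ℕ) (p : Multiset ℕ) : Multiset ℕ :=
  expansionOf IsOrthogonal (IsSpecialOrth N) N p

/-- The smallest part of a (nonempty) partition. -/
def minPart (p : Multiset ℕ) : ℕ := p.sum - psum p (Multiset.card p - 1)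

/-- The largest part of a partition. -/
def maxPart (p : Multiset ℕ) : ℕ := psum p 1

/-- `p^-`: decrease the smallest part of `p` by `1` (deleting it if it becomes `0`). -/
def pMinus (p : Multiset ℕ) : Multiset ℕ :=
  ((minPart p - 1) ::ₘ p.erase (minPart p)).filter (0 < ·)

/-- `p^+`: increase the largest part of `p` by `1`. -/
def pPlus (p : Multiset ℕ) : Multiset ℕ :=
  (maxPart p + 1) ::ₘ p.erase (maxPart p)

/-- `dim_{sp_{2n}}(p) = 2n² + n − ½(Σ_i ((p^t)_i)² + #{i : p_i odd})`,
the dimension of the nilpotent orbit of `sp_{2n}` attached to a symplectic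
partition `p` of `2n`. -/
def dimSp (n : ℕ) (p : Multiset ℕ) : ℚ :=
  (2 * (n : ℚ) ^ 2 + n) -
    (((transpose p).map (fun x => (x : ℚ) ^ 2)).sum + (p.countP (Odd ·) : ℚ)) / 2

/-- `dim_{so_m}(p) = m(m−1)/2 − ½(Σ_i ((p^t)_i)² − #{i : p_i odd})`,
the dimension of the nilpotent orbit of `so_m` attached to an orthogonal
partition `p` of `m`. -/
def dimSO (m : ℕ) (p : Multiset ℕ) : ℚ :=
  ((m : ℚ) * ((m : ℚ) - 1)) / 2 -
    (((transpose p).map (fun x => (x : ℚ) ^ 2)).sum - (p.countP (Odd ·) : ℚ)) / 2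

/-- The partition `p_1 = [⌊b_1/2⌋^{a_1} ⋯ ⌊b_r/2⌋^{a_r}]^t` attached to
`p = [b_1^{a_1} ⋯ b_r^{a_r}]` (zero entries discarded). -/
def pOne (p : Multiset ℕ) : Multiset ℕ := transpose (p.map (· / 2))

/-- `n* = ⌊(Σ_{i : b_i odd} a_i)/2⌋`, i.e. half the number of odd parts. -/
def nStar (p : Multiset ℕ) : ℕ := p.countP (Odd ·) / 2

/-- `[q q (m)]`: two copies of `q` together with one extra part `m`
(no extra part when `m = 0`). -/
def qqm (q : Multiset ℕ) (m : ℕ) : Multiset ℕ :=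
  if m = 0 then q + q else m ::ₘ (q + q)


-- machinery
def cfn (q : Multiset ℕ) (j : ℕ) : ℕ := q.countP (fun a => j + 1 ≤ a)

def dfn (q : Multiset ℕ) (k : ℕ) : ℕ :=
  ((Finset.range q.sum).filter (fun j => k ≤ cfn q j)).card

lemma cfn_anti (q : Multiset ℕ) {j j' : ℕ} (h : j ≤ j') : cfn q j' ≤ cfn q j := by
  unfold cfn
  rw [Multiset.countP_eq_card_filter, Multiset.countP_eq_card_filter]
  exact Multiset.card_le_card (Multiset.monotone_filter_right q (fun a ha => le_trans (by omega) ha))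

lemma mem_le_sum {q : Multiset ℕ} {a : ℕ} (h : a ∈ q) : a ≤ q.sum := by
  rw [← Multiset.cons_erase h, Multiset.sum_cons]; omega

lemma cfn_pos_lt_sum {q : Multiset ℕ} {j : ℕ} (h : 1 ≤ cfn q j) : j < q.sum := by
  unfold cfn at h
  rw [Multiset.countP_eq_card_filter] at h
  have hc : 0 < Multiset.card (Multiset.filter (fun a => j + 1 ≤ a) q) := h
  obtain ⟨a, ha⟩ := Multiset.card_pos_iff_exists_mem.1 hc
  rw [Multiset.mem_filter] at ha
  have := mem_le_sum ha.1; omega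

lemma cfn_eq_zero_of_le {q : Multiset ℕ} {j : ℕ} (h : q.sum ≤ j) : cfn q j = 0 := by
  by_contra hc
  have := cfn_pos_lt_sum (q := q) (j := j) (by omega)
  omega

lemma cfn_le_card (q : Multiset ℕ) (j : ℕ) : cfn q j ≤ Multiset.card q :=
  Multiset.countP_le_card _ _

lemma card_le_sum {q : Multiset ℕ} (h0 : 0 ∉ q) : Multiset.card q ≤ q.sum := by
  induction q using Multiset.induction_on with
  | empty => simp
  | cons a s ih =>
    simp only [Multiset.mem_cons, not_or] at h0
    rw [Multiset.card_cons, Multiset.sum_cons]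
    have := ih h0.2
    have : 0 ≠ a := h0.1
    omega

lemma lt_dfn_iff {q : Multiset ℕ} {j k : ℕ} (hk : 1 ≤ k) : j < dfn q k ↔ k ≤ cfn q j := by
  constructor
  · intro h
    by_contra hc
    have hsub : (Finset.range q.sum).filter (fun j' => k ≤ cfn q j') ⊆ Finset.range j := by
      intro x hx
      rw [Finset.mem_filter] at hx
      rw [Finset.mem_range]
      by_contra hxj
      exact hc (le_trans hx.2 (cfn_anti q (by omega)))
    have := Finset.card_le_card hsub
    rw [Finset.card_range] at this
    unfold dfn at h; omega
  · intro h
    have hsub : Finset.range (j+1) ⊆ (Finset.range q.sum).filter (fun j' => k ≤ cfn q j') := by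
      intro x hx
      rw [Finset.mem_range] at hx
      have hcx : k ≤ cfn q x := le_trans h (cfn_anti q (by omega))
      rw [Finset.mem_filter, Finset.mem_range]
      exact ⟨cfn_pos_lt_sum (by omega), hcx⟩
    have := Finset.card_le_card hsub
    rw [Finset.card_range] at this
    unfold dfn; omega

lemma dfn_anti (q : Multiset ℕ) {k k' : ℕ} (h : k ≤ k') : dfn q k' ≤ dfn q k := by
  apply Finset.card_le_card
  intro x hx
  rw [Finset.mem_filter] at hx ⊢
  exact ⟨hx.1, by omega⟩

lemma dfn_filter_ext {q : Multiset ℕ} {k J : ℕ} (hk : 1 ≤ k) (hJ : q.sum ≤ J) :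
    dfn q k = ((Finset.range J).filter (fun j => k ≤ cfn q j)).card := by
  unfold dfn
  congr 1
  apply Finset.ext
  intro x
  simp only [Finset.mem_filter, Finset.mem_range]
  constructor
  · rintro ⟨h1, h2⟩; exact ⟨by omega, h2⟩
  · rintro ⟨h1, h2⟩; exact ⟨cfn_pos_lt_sum (by omega), h2⟩

lemma min_eq_sum_range (k x : ℕ) : min k x = ∑ i ∈ Finset.range k, (if i < x then 1 else 0) := by
  induction k with
  | zero => simp
  | succ k ih =>
    rw [Finset.sum_range_succ, ← ih]
    rcases Nat.lt_or_ge k x with h | h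
    · rw [if_pos h]; omega
    · rw [if_neg (by omega)]; omega

lemma psum_eq_sum_dfn (q : Multiset ℕ) (k : ℕ) :
    psum q k = ∑ i ∈ Finset.range k, dfn q (i + 1) := by
  unfold psum
  have h1 : ((Multiset.range q.sum).map (fun j => min k (q.countP (fun a => j + 1 ≤ a)))).sum
      = ∑ j ∈ Finset.range q.sum, min k (cfn q j) := rfl
  rw [h1]
  have h2 : ∀ j ∈ Finset.range q.sum, min k (cfn q j)
      = ∑ i ∈ Finset.range k, (if i < cfn q j then 1 else 0) :=
    fun j _ => min_eq_sum_range _ _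
  rw [Finset.sum_congr rfl h2, Finset.sum_comm]
  apply Finset.sum_congr rfl
  intro i _
  unfold dfn
  rw [Finset.card_filter]
  apply Finset.sum_congr rfl
  intro j _
  congr 1

lemma psum_succ (q : Multiset ℕ) (k : ℕ) : psum q (k + 1) = psum q k + dfn q (k + 1) := by
  rw [psum_eq_sum_dfn, psum_eq_sum_dfn, Finset.sum_range_succ]

lemma psum_zero (q : Multiset ℕ) : psum q 0 = 0 := by rw [psum_eq_sum_dfn]; simp

lemma sum_ite_le (a J : ℕ) : ∑ j ∈ Finset.range J, (if j + 1 ≤ a then 1 else 0) = min a J := by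
  have : ∀ j, (if j + 1 ≤ a then (1:ℕ) else 0) = if j < a then 1 else 0 := by
    intro j
    rcases Nat.lt_or_ge j a with h | h
    · rw [if_pos (by omega), if_pos h]
    · rw [if_neg (by omega), if_neg (by omega)]
  rw [Finset.sum_congr rfl (fun j _ => this j), ← min_eq_sum_range, Nat.min_comm]

lemma sum_cfn_eq_sum_min (q : Multiset ℕ) (J : ℕ) :
    ∑ j ∈ Finset.range J, cfn q j = (q.map (fun a => min a J)).sum := by
  induction q using Multiset.induction_on with
  | empty => simp [cfn]
  | cons a s ih =>
    have hc : ∀ j, cfn (a ::ₘ s) j = cfn s j + (if j + 1 ≤ a then 1 else 0) := by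
      intro j; unfold cfn; rw [Multiset.countP_cons]
    rw [Finset.sum_congr rfl (fun j _ => hc j), Finset.sum_add_distrib, ih,
      Multiset.map_cons, Multiset.sum_cons, sum_ite_le]
    omega

lemma sum_cfn {q : Multiset ℕ} {J : ℕ} (hJ : ∀ a ∈ q, a ≤ J) :
    ∑ j ∈ Finset.range J, cfn q j = q.sum := by
  rw [sum_cfn_eq_sum_min]
  congr 1
  rw [Multiset.map_congr rfl (fun a ha => min_eq_left (hJ a ha)), Multiset.map_id']

lemma psum_of_card_le {q : Multiset ℕ} {k : ℕ} (h : Multiset.card q ≤ k) : psum q k = q.sum := by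
  unfold psum
  have h1 : ((Multiset.range q.sum).map (fun j => min k (q.countP (fun a => j + 1 ≤ a)))).sum
      = ∑ j ∈ Finset.range q.sum, min k (cfn q j) := rfl
  rw [h1]
  have : ∀ j ∈ Finset.range q.sum, min k (cfn q j) = cfn q j := by
    intro j _
    have := cfn_le_card q j
    omega
  rw [Finset.sum_congr rfl this]
  exact sum_cfn (fun a ha => mem_le_sum ha)

lemma cfn_succ_count (q : Multiset ℕ) (v : ℕ) : cfn q v = cfn q (v + 1) + q.count (v + 1) := by
  induction q using Multiset.induction_on with
  | empty => simp [cfn]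
  | cons a s ih =>
    unfold cfn at *
    rw [Multiset.countP_cons, Multiset.countP_cons, Multiset.count_cons, ih]
    rcases Nat.lt_trichotomy a (v + 1) with h | h | h
    · rw [if_neg (by omega), if_neg (by omega), if_neg (by omega)]; omega
    · rw [if_pos (by omega), if_neg (by omega), if_pos (by omega)]; omega
    · rw [if_pos (by omega), if_pos (by omega), if_neg (by omega)]; omega

lemma dfn_mem {q : Multiset ℕ} {k : ℕ} (hk : 1 ≤ k) (h : 1 ≤ dfn q k) : dfn q k ∈ q := by
  set u := dfn q k with hu
  have h1 : k ≤ cfn q (u - 1) := (lt_dfn_iff hk).1 (by omega)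
  have h2 : ¬ (k ≤ cfn q u) := fun hc => by have := (lt_dfn_iff hk).2 hc; omega
  have h3 : cfn q (u - 1) = cfn q u + q.count u := by
    have := cfn_succ_count q (u - 1)
    have hu1 : u - 1 + 1 = u := by omega
    rw [hu1] at this
    exact this
  rw [← Multiset.count_pos]
  omega

lemma zero_not_mem_transpose (q : Multiset ℕ) : 0 ∉ transpose q := by
  unfold transpose
  intro h
  have := (Multiset.mem_filter.1 h).2
  omega

lemma count_transpose {q : Multiset ℕ} {v : ℕ} (hv : 1 ≤ v) :
    (transpose q).count v = ((Finset.range q.sum).filter (fun j => cfn q j = v)).card := by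
  unfold transpose
  rw [Multiset.count_filter_of_pos (by omega)]
  have h1 : (Multiset.range q.sum).map (fun j => q.countP (fun a => j + 1 ≤ a))
      = (Multiset.range q.sum).map (cfn q) := rfl
  rw [h1, Multiset.count_map]
  rw [Finset.card_def, Finset.filter_val, Finset.range_val]
  congr 1
  apply Multiset.filter_congr
  intro x _
  exact eq_comm

lemma sum_filter_pos (s : Multiset ℕ) : (s.filter (0 < ·)).sum = s.sum := by
  induction s using Multiset.induction_on with
  | empty => simp
  | cons a t ih =>
    rw [Multiset.filter_cons, Multiset.sum_cons]
    rcases Nat.eq_zero_or_pos a with h | h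
    · rw [if_neg (by omega)]; simp [h, ih]
    · rw [if_pos h]; simp [ih]

lemma sum_transpose (q : Multiset ℕ) : (transpose q).sum = q.sum := by
  unfold transpose
  rw [sum_filter_pos]
  have h1 : ((Multiset.range q.sum).map (fun j => q.countP (fun a => j + 1 ≤ a))).sum
      = ∑ j ∈ Finset.range q.sum, cfn q j := rfl
  rw [h1]
  exact sum_cfn (fun a ha => mem_le_sum ha)

lemma cfn_transpose (q : Multiset ℕ) (j : ℕ) : cfn (transpose q) j = dfn q (j + 1) := by
  unfold transpose cfn
  rw [Multiset.countP_filter]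
  have h1 : ∀ x, ((j + 1 ≤ x) ∧ (0 < x)) = (j + 1 ≤ x) := by
    intro x; apply propext; omega
  rw [Multiset.countP_congr rfl (fun x _ => h1 x), Multiset.countP_map]
  unfold dfn
  rw [Finset.card_def, Finset.filter_val, Finset.range_val]
  rfl

lemma dfn_transpose {q : Multiset ℕ} (h0 : 0 ∉ q) (k : ℕ) :
    dfn (transpose q) (k + 1) = cfn q k := by
  have hJ : (transpose q).sum = q.sum := sum_transpose q
  have key : ∀ j, (k + 1 ≤ cfn (transpose q) j) ↔ (j + 1 ≤ cfn q k) := by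
    intro j
    rw [cfn_transpose]
    have := lt_dfn_iff (q := q) (j := k) (k := j + 1) (by omega)
    omega
  unfold dfn
  rw [hJ]
  have h2 : (Finset.range q.sum).filter (fun j => k + 1 ≤ cfn (transpose q) j)
      = (Finset.range q.sum).filter (fun j => j + 1 ≤ cfn q k) := by
    apply Finset.filter_congr
    intro j _
    exact key j
  rw [h2]
  have h3 : (Finset.range q.sum).filter (fun j => j + 1 ≤ cfn q k) = Finset.range (cfn q k) := by
    apply Finset.ext
    intro x
    simp only [Finset.mem_filter, Finset.mem_range]
    constructor
    · rintro ⟨_, h⟩; omega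
    · intro h
      have hle : cfn q k ≤ Multiset.card q := cfn_le_card q k
      have hcs : Multiset.card q ≤ q.sum := card_le_sum h0
      exact ⟨by omega, by omega⟩
  rw [h3, Finset.card_range]

lemma dfn_eq_add_count_transpose {w : Multiset ℕ} {u : ℕ} (hu : 1 ≤ u) :
    dfn w u = dfn w (u + 1) + (transpose w).count u := by
  rw [count_transpose hu]
  unfold dfn
  have hsplit : (Finset.range w.sum).filter (fun j => u ≤ cfn w j)
      = ((Finset.range w.sum).filter (fun j => u + 1 ≤ cfn w j))
        ∪ ((Finset.range w.sum).filter (fun j => cfn w j = u)) := by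
    rw [← Finset.filter_or]
    apply Finset.filter_congr
    intro j _
    omega
  have hdisj : Disjoint ((Finset.range w.sum).filter (fun j => u + 1 ≤ cfn w j))
      ((Finset.range w.sum).filter (fun j => cfn w j = u)) := by
    rw [Finset.disjoint_filter]
    intro x _ hx
    omega
  rw [hsplit, Finset.card_union_of_disjoint hdisj]

lemma transpose_transpose {q : Multiset ℕ} (h0 : 0 ∉ q) : transpose (transpose q) = q := by
  apply Multiset.ext.2
  intro v
  rcases Nat.eq_zero_or_pos v with hv | hv
  · subst hv
    rw [Multiset.count_eq_zero_of_notMem (zero_not_mem_transpose _),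
      Multiset.count_eq_zero_of_notMem h0]
  · have hv1 : v = (v - 1) + 1 := by omega
    have e1 : dfn (transpose q) v = dfn (transpose q) (v + 1) + (transpose (transpose q)).count v :=
      dfn_eq_add_count_transpose (by omega)
    have e2 : dfn (transpose q) v = cfn q (v - 1) := by
      have := dfn_transpose h0 (v - 1)
      rw [show v - 1 + 1 = v by omega] at this
      exact this
    have e3 : dfn (transpose q) (v + 1) = cfn q v := dfn_transpose h0 v
    have e4 : cfn q (v - 1) = cfn q v + q.count v := by
      have := cfn_succ_count q (v - 1)
      rw [show v - 1 + 1 = v by omega] at this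
      exact this
    omega

lemma domle_refl (q : Multiset ℕ) : DomLE q q := fun _ => le_refl _

lemma cfn_eq_card_dfn {q : Multiset ℕ} {j B : ℕ} (hB : Multiset.card q ≤ B) :
    cfn q j = ((Finset.range B).filter (fun k => j < dfn q (k + 1))).card := by
  have key : ∀ k, (j < dfn q (k + 1)) ↔ (k < cfn q j) := by
    intro k
    rw [lt_dfn_iff (by omega)]
    omega
  rw [Finset.filter_congr (fun k _ => key k)]
  have : (Finset.range B).filter (fun k => k < cfn q j) = Finset.range (cfn q j) := by
    apply Finset.ext
    intro x
    simp only [Finset.mem_filter, Finset.mem_range]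
    have := cfn_le_card q j
    omega
  rw [this, Finset.card_range]

lemma eq_of_cfn_eq {q1 q2 : Multiset ℕ} (h01 : 0 ∉ q1) (h02 : 0 ∉ q2)
    (h : ∀ j, cfn q1 j = cfn q2 j) : q1 = q2 := by
  apply Multiset.ext.2
  intro v
  rcases Nat.eq_zero_or_pos v with hv | hv
  · subst hv
    rw [Multiset.count_eq_zero_of_notMem h01, Multiset.count_eq_zero_of_notMem h02]
  · have h1 := cfn_succ_count q1 (v - 1)
    have h2 := cfn_succ_count q2 (v - 1)
    rw [show v - 1 + 1 = v by omega] at h1 h2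
    have e1 := h (v - 1)
    have e2 := h v
    omega

lemma domle_antisymm {q1 q2 : Multiset ℕ} (h01 : 0 ∉ q1) (h02 : 0 ∉ q2)
    (h : DomLE q1 q2) (h' : DomLE q2 q1) : q1 = q2 := by
  have hpsum : ∀ k, psum q1 k = psum q2 k := fun k => le_antisymm (h k) (h' k)
  have hdfn : ∀ k, dfn q1 (k + 1) = dfn q2 (k + 1) := by
    intro k
    have e1 := psum_succ q1 k
    have e2 := psum_succ q2 k
    have := hpsum k
    have := hpsum (k + 1)
    omega
  apply eq_of_cfn_eq h01 h02
  intro j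
  rw [cfn_eq_card_dfn (B := Multiset.card q1 + Multiset.card q2) (by omega),
    cfn_eq_card_dfn (B := Multiset.card q1 + Multiset.card q2) (by omega)]
  congr 1
  apply Finset.filter_congr
  intro k _
  rw [hdfn k]

lemma collapse_eval {P : Multiset ℕ → Prop} {N : ℕ} {p q : Multiset ℕ}
    (h : IsCollapseOf P N p q) : collapseOf P N p = q := by
  unfold collapseOf
  rw [dif_pos ⟨q, h⟩]
  have hspec := (Exists.intro q h : ∃ q', IsCollapseOf P N p q').choose_spec
  set q' := (Exists.intro q h : ∃ q', IsCollapseOf P N p q').choose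
  exact domle_antisymm hspec.1.2 h.1.2
    (h.2.2.2 q' hspec.1 hspec.2.1 hspec.2.2.1)
    (hspec.2.2.2 q h.1 h.2.1 h.2.2.1)

lemma expansion_eval {P Sp : Multiset ℕ → Prop} {N : ℕ} {p q : Multiset ℕ}
    (h : IsExpansionOf P Sp N p q) : expansionOf P Sp N p = q := by
  unfold expansionOf
  rw [dif_pos ⟨q, h⟩]
  have hspec := (Exists.intro q h : ∃ q', IsExpansionOf P Sp N p q').choose_spec
  set q' := (Exists.intro q h : ∃ q', IsExpansionOf P Sp N p q').choose
  exact domle_antisymm hspec.1.2 h.1.2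
    (hspec.2.2.2.2 q h.1 h.2.1 h.2.2.1 h.2.2.2.1)
    (h.2.2.2.2 q' hspec.1 hspec.2.1 hspec.2.2.1 hspec.2.2.2.1)

lemma self_collapse {P : Multiset ℕ → Prop} {N : ℕ} {q : Multiset ℕ}
    (hpart : IsPartitionOf N q) (hP : P q) : IsCollapseOf P N q q :=
  ⟨hpart, hP, domle_refl q, fun _ _ _ h => h⟩

lemma self_expansion {P Sp : Multiset ℕ → Prop} {N : ℕ} {q : Multiset ℕ}
    (hpart : IsPartitionOf N q) (hP : P q) (hSp : Sp q) : IsExpansionOf P Sp N q q :=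
  ⟨hpart, hP, hSp, domle_refl q, fun _ _ _ _ h => h⟩

lemma sum_mod_countP_odd (s : Multiset ℕ) : s.sum % 2 = s.countP (fun a => Odd a) % 2 := by
  induction s using Multiset.induction_on with
  | empty => simp
  | cons a t ih =>
    rw [Multiset.sum_cons, Multiset.countP_cons]
    rcases Nat.even_or_odd a with h | h
    · rw [if_neg (Nat.not_odd_iff_even.mpr h)]
      obtain ⟨x, hx⟩ := h
      omega
    · rw [if_pos h]
      obtain ⟨x, hx⟩ := h
      omega

lemma even_countP_of_counts {s : Multiset ℕ} {P : ℕ → Prop} [DecidablePred P]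
    (h : ∀ a, P a → Even (s.count a)) : Even (s.countP P) := by
  rw [Multiset.countP_eq_card_filter, ← Multiset.toFinset_sum_count_eq]
  apply Finset.even_sum
  intro a ha
  rw [Multiset.count_filter]
  by_cases hPa : P a
  · rw [if_pos hPa]; exact h a hPa
  · rw [if_neg hPa]; exact Even.zero

lemma odd_sum_range {g : ℕ → ℕ} {l : ℕ} (h : ∀ i < l, Odd (g i)) :
    (∑ i ∈ Finset.range l, g i) % 2 = l % 2 := by
  induction l with
  | zero => simp
  | succ l ih =>
    rw [Finset.sum_range_succ]
    have h1 := ih (fun i hi => h i (by omega))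
    obtain ⟨x, hx⟩ := h l (by omega)
    omega

/-- Key combinatorial lemma: if all parts of `r` are odd, `q'` is orthogonal with the
same total sum, and every partial sum of `q'` exceeds that of `r` by at most one,
then `q'` is dominated by `r`. -/
lemma star_lemma {r q' : Multiset ℕ} (hodd : ∀ a ∈ r, Odd a) (horth : IsOrthogonal q')
    (hsum : q'.sum = r.sum) (hle : ∀ k, psum q' k ≤ psum r k + 1) : DomLE q' r := by
  by_contra hc
  unfold DomLE at hc
  push_neg at hc
  obtain ⟨k₀, hk₀⟩ := hc
  have hS₀ : psum q' k₀ = psum r k₀ + 1 := by have := hle k₀; omega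
  -- partial sums stabilize
  have hstab : ∀ k, Multiset.card q' + Multiset.card r ≤ k → psum q' k = psum r k := by
    intro k hk
    rw [psum_of_card_le (by omega), psum_of_card_le (by omega), hsum]
  set B := Multiset.card q' + Multiset.card r with hB
  have hk₀B : k₀ < B := by
    by_contra hcon
    have := hstab k₀ (by omega)
    omega
  set Spred := fun k => psum q' k = psum r k + 1 with hSpred
  have hdec : DecidablePred Spred := fun k => Nat.decEq _ _
  set l := Nat.findGreatest Spred B with hl
  have hlS : Spred l := Nat.findGreatest_spec (P := Spred) (by omega : k₀ ≤ B) hS₀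
  have hl1 : 1 ≤ l := by
    by_contra hcon
    have : l = 0 := by omega
    rw [this] at hlS
    have := psum_zero q'
    have := psum_zero r
    simp only [Spred] at hlS
    omega
  have hlnot : ¬ Spred (l + 1) := by
    rcases Nat.lt_or_ge B (l + 1) with h | h
    · intro hcon
      have := hstab (l + 1) (by omega)
      simp only [Spred] at hcon
      omega
    · exact Nat.findGreatest_is_greatest (by omega) h
  have hps_l : psum q' l = psum r l + 1 := hlS
  have hps_l1 : psum q' (l + 1) ≤ psum r (l + 1) := by
    have h1 := hle (l + 1)
    simp only [Spred] at hlnot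
    omega
  have hps_lm : psum q' (l - 1) ≤ psum r (l - 1) + 1 := hle (l - 1)
  -- parts
  have hq'succ := psum_succ q' l
  have hrsucc := psum_succ r l
  have hq'l := psum_succ q' (l - 1)
  have hrl := psum_succ r (l - 1)
  rw [show l - 1 + 1 = l by omega] at hq'l hrl
  have hpart1 : dfn r l ≤ dfn q' l := by omega
  have hpart2 : dfn q' (l + 1) + 1 ≤ dfn r (l + 1) := by omega
  have hpart3 : dfn r (l + 1) ≤ dfn r l := dfn_anti r (by omega)
  -- the l-th part of q'
  set v := dfn q' l with hv
  have hvpos : 1 ≤ v := by omega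
  have hvl : cfn q' (v - 1) = l := by
    have h1 : l ≤ cfn q' (v - 1) := by
      have := (lt_dfn_iff (q := q') (j := v - 1) (k := l) (by omega))
      omega
    have h2 : ¬ (l + 1 ≤ cfn q' (v - 1)) := by
      intro hcon
      have := (lt_dfn_iff (q := q') (j := v - 1) (k := l + 1) (by omega)).2 hcon
      omega
    omega
  -- the multiset of the l largest parts of q'
  set f := q'.filter (fun a => v ≤ a) with hf
  have hcardf : Multiset.card f = l := by
    rw [hf, ← Multiset.countP_eq_card_filter]
    have : q'.countP (fun a => v ≤ a) = cfn q' (v - 1) := by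
      unfold cfn
      rw [show v - 1 + 1 = v from by omega]
    rw [this, hvl]
  have hsumf : f.sum = psum q' l := by
    have hpt : ∀ j, min l (cfn q' j) = cfn f j := by
      intro j
      rcases Nat.lt_or_ge j (v - 1) with hj | hj
      · have h1 : l ≤ cfn q' j := le_trans (le_of_eq hvl.symm) (cfn_anti q' (by omega))
        have h2 : cfn f j = Multiset.card f := by
          unfold cfn
          rw [Multiset.countP_eq_card]
          intro a ha
          have := (Multiset.mem_filter.1 (hf ▸ ha)).2
          omega
        rw [h2, hcardf]
        omega
      · have h1 : cfn q' j ≤ l := le_trans (cfn_anti q' (by omega)) (le_of_eq hvl)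
        have h2 : cfn f j = cfn q' j := by
          unfold cfn
          rw [hf, Multiset.countP_filter]
          exact Multiset.countP_congr rfl (fun x _ => propext (by omega))
        rw [h2]
        omega
    unfold psum
    have h1 : ((Multiset.range q'.sum).map (fun j => min l (q'.countP (fun a => j + 1 ≤ a)))).sum
        = ∑ j ∈ Finset.range q'.sum, min l (cfn q' j) := rfl
    rw [h1, Finset.sum_congr rfl (fun j _ => hpt j)]
    exact (sum_cfn (fun a ha => mem_le_sum (Multiset.mem_of_mem_filter ha))).symm
  -- parity of psum r l
  have hrparity : psum r l % 2 = l % 2 := by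
    rw [psum_eq_sum_dfn]
    apply odd_sum_range
    intro i hi
    have h1 : 1 ≤ dfn r (i + 1) := by
      have := dfn_anti r (show i + 1 ≤ l by omega)
      omega
    exact hodd _ (dfn_mem (by omega) h1)
  -- parity of f
  have hf1 : f.sum % 2 = f.countP (fun a => Odd a) % 2 := sum_mod_countP_odd f
  have hf2 : Even (f.countP (fun a => Even a)) := by
    apply even_countP_of_counts
    intro a ha
    rw [hf, Multiset.count_filter]
    by_cases hva : v ≤ a
    · rw [if_pos hva]; exact horth a ha
    · rw [if_neg hva]; exact Even.zero
  have hf3 : f.countP (fun a => Odd a) + f.countP (fun a => Even a) = Multiset.card f := by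
    rw [Multiset.countP_eq_card_filter, Multiset.countP_eq_card_filter]
    have : f.filter (fun a => Even a) = f.filter (fun a => ¬ Odd a) := by
      apply Multiset.filter_congr
      intro x _
      exact (Nat.not_odd_iff_even.symm)

    rw [this, ← Multiset.card_add, Multiset.filter_add_not]
  obtain ⟨x2, hx2⟩ := hf2
  omega

lemma maxPart_eq_dfn (q : Multiset ℕ) : maxPart q = dfn q 1 := by
  unfold maxPart
  rw [psum_eq_sum_dfn]
  simp

lemma le_maxPart {q : Multiset ℕ} {a : ℕ} (h : a ∈ q) : a ≤ maxPart q := by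
  rw [maxPart_eq_dfn]
  rcases Nat.eq_zero_or_pos a with ha | ha
  · omega
  · have h1 : 1 ≤ cfn q (a - 1) := by
      rw [show (1 : ℕ) ≤ cfn q (a-1) ↔ 0 < cfn q (a-1) from by omega]
      unfold cfn
      rw [Multiset.countP_pos]
      exact ⟨a, h, by omega⟩
    have := (lt_dfn_iff (q := q) (j := a - 1) (k := 1) (by omega)).2 h1
    omega

lemma maxPart_mem {q : Multiset ℕ} (hq : q ≠ 0) (h0 : 0 ∉ q) : maxPart q ∈ q := by
  rw [maxPart_eq_dfn]
  apply dfn_mem (by omega)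
  obtain ⟨a, ha⟩ := Multiset.exists_mem_of_ne_zero hq
  have h1 : 1 ≤ a := by
    rcases Nat.eq_zero_or_pos a with h' | h'
    · exact absurd (h' ▸ ha) h0
    · omega
  have := le_maxPart ha
  rw [maxPart_eq_dfn] at this
  omega

lemma cfn_pPlus {q : Multiset ℕ} (hb : maxPart q ∈ q) (j : ℕ) :
    cfn (pPlus q) j = cfn q j + (if j = maxPart q then 1 else 0) := by
  set b := maxPart q with hbdef
  have hq : q = b ::ₘ q.erase b := (Multiset.cons_erase hb).symm
  have h1 : cfn (pPlus q) j = cfn (q.erase b) j + (if j + 1 ≤ b + 1 then 1 else 0) := by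
    unfold pPlus cfn
    rw [← hbdef, Multiset.countP_cons]
  have h2 : cfn q j = cfn (q.erase b) j + (if j + 1 ≤ b then 1 else 0) := by
    conv_lhs => rw [hq]
    unfold cfn
    rw [Multiset.countP_cons]
  rw [h1, h2]
  rcases Nat.lt_trichotomy j b with h | h | h
  · rw [if_pos (by omega), if_pos (by omega), if_neg (by omega)]
  · rw [if_pos (by omega), if_neg (by omega), if_pos (by omega)]
  · rw [if_neg (by omega), if_neg (by omega), if_neg (by omega)]

lemma sum_pPlus {q : Multiset ℕ} (hb : maxPart q ∈ q) : (pPlus q).sum = q.sum + 1 := by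
  unfold pPlus
  rw [Multiset.sum_cons]
  have hq : q = maxPart q ::ₘ q.erase (maxPart q) := (Multiset.cons_erase hb).symm
  conv_rhs => rw [hq]
  rw [Multiset.sum_cons]
  omega

lemma zero_not_mem_pPlus {q : Multiset ℕ} (h0 : 0 ∉ q) : 0 ∉ pPlus q := by
  unfold pPlus
  rw [Multiset.mem_cons]
  rintro (h | h)
  · omega
  · exact h0 (Multiset.mem_of_mem_erase h)

lemma sum_min_ite {c : ℕ → ℕ} {J x k : ℕ} (hx : x < J) :
    ∑ j ∈ Finset.range J, min k (c j + if j = x then 1 else 0)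
      = (∑ j ∈ Finset.range J, min k (c j)) + (if c x < k then 1 else 0) := by
  have hmem : x ∈ Finset.range J := Finset.mem_range.2 hx
  rw [← Finset.add_sum_erase _ _ hmem, ← Finset.add_sum_erase _ (fun j => min k (c j)) hmem]
  have h1 : ∀ j ∈ (Finset.range J).erase x,
      min k (c j + if j = x then 1 else 0) = min k (c j) := by
    intro j hj
    rw [if_neg (Finset.ne_of_mem_erase hj), Nat.add_zero]
  rw [Finset.sum_congr rfl h1, if_pos rfl]
  have : min k (c x + 1) = min k (c x) + (if c x < k then 1 else 0) := by
    rcases Nat.lt_or_ge (c x) k with h | h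
    · rw [if_pos h]; omega
    · rw [if_neg (by omega)]; omega
  omega

lemma psum_cons_one (w : Multiset ℕ) (k : ℕ) :
    psum (1 ::ₘ w) k = (∑ j ∈ Finset.range (w.sum + 1), min k (cfn w j))
      + (if cfn w 0 < k then 1 else 0) := by
  unfold psum
  have hsum : (1 ::ₘ w).sum = w.sum + 1 := by rw [Multiset.sum_cons]; omega
  have h1 : ((Multiset.range (1 ::ₘ w).sum).map
      (fun j => min k ((1 ::ₘ w).countP (fun a => j + 1 ≤ a)))).sum
      = ∑ j ∈ Finset.range (w.sum + 1), min k (cfn (1 ::ₘ w) j) := by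
    rw [hsum]; rfl
  rw [h1]
  have h2 : ∀ j ∈ Finset.range (w.sum + 1), min k (cfn (1 ::ₘ w) j)
      = min k (cfn w j + if j = 0 then 1 else 0) := by
    intro j _
    unfold cfn
    rw [Multiset.countP_cons]
    congr 1
    rcases Nat.eq_zero_or_pos j with h | h
    · subst h; rw [if_pos (by omega), if_pos rfl]
    · rw [if_neg (by omega), if_neg (by omega)]
  rw [Finset.sum_congr rfl h2, sum_min_ite (by omega)]

lemma psum_pPlus {w : Multiset ℕ} (hw : w ≠ 0) (h0 : 0 ∉ w) (k : ℕ) :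
    psum (pPlus w) k = (∑ j ∈ Finset.range (w.sum + 1), min k (cfn w j))
      + (if cfn w (maxPart w) < k then 1 else 0) := by
  have hb : maxPart w ∈ w := maxPart_mem hw h0
  unfold psum
  have h1 : ((Multiset.range (pPlus w).sum).map
      (fun j => min k ((pPlus w).countP (fun a => j + 1 ≤ a)))).sum
      = ∑ j ∈ Finset.range (w.sum + 1), min k (cfn (pPlus w) j) := by
    rw [sum_pPlus hb]; rfl
  rw [h1]
  have h2 : ∀ j ∈ Finset.range (w.sum + 1), min k (cfn (pPlus w) j)
      = min k (cfn w j + if j = maxPart w then 1 else 0) := by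
    intro j _
    rw [cfn_pPlus hb]
  rw [Finset.sum_congr rfl h2, sum_min_ite (by have := mem_le_sum hb; omega)]

lemma psum_cons_one_le_pPlus {w : Multiset ℕ} (hw : w ≠ 0) (h0 : 0 ∉ w) (k : ℕ) :
    psum (1 ::ₘ w) k ≤ psum (pPlus w) k := by
  rw [psum_cons_one, psum_pPlus hw h0]
  have hmono : cfn w (maxPart w) ≤ cfn w 0 := cfn_anti w (by omega)
  rcases Nat.lt_or_ge (cfn w 0) k with h | h
  · rw [if_pos h, if_pos (by omega)]
  · rw [if_neg (by omega)]; omega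

lemma psum_pPlus_le_cons_one {w : Multiset ℕ} (hw : w ≠ 0) (h0 : 0 ∉ w) (k : ℕ) :
    psum (pPlus w) k ≤ psum (1 ::ₘ w) k + 1 := by
  rw [psum_cons_one, psum_pPlus hw h0]
  rcases Nat.lt_or_ge (cfn w (maxPart w)) k with h | h
  · rw [if_pos h]; omega
  · rw [if_neg (by omega)]; omega

lemma cfn_p_maxPart_eq_zero {p : Multiset ℕ} : cfn p (maxPart p) = 0 := by
  unfold cfn
  rw [Multiset.countP_eq_zero]
  intro a ha
  have := le_maxPart ha
  omega

/-- Adding one to the largest part of a nonempty partition adds one column of height 1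
to the transpose. -/
lemma transpose_pPlus {p : Multiset ℕ} (hp0 : p ≠ 0) (h0 : 0 ∉ p) :
    transpose (pPlus p) = 1 ::ₘ transpose p := by
  have hb : maxPart p ∈ p := maxPart_mem hp0 h0
  have hble : maxPart p ≤ p.sum := mem_le_sum hb
  have hsum : (pPlus p).sum = p.sum + 1 := sum_pPlus hb
  have hcpb : cfn p (maxPart p) = 0 := cfn_p_maxPart_eq_zero
  have hG : ∀ j, cfn (pPlus p) j = cfn p j + (if j = maxPart p then 1 else 0) := cfn_pPlus hb
  have hd1 : dfn (pPlus p) 1 = dfn p 1 + 1 := by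
    unfold dfn
    rw [hsum]
    have h1 : (Finset.range (p.sum + 1)).filter (fun j => 1 ≤ cfn (pPlus p) j)
        = ((Finset.range (p.sum + 1)).filter (fun j => 1 ≤ cfn p j))
          ∪ ((Finset.range (p.sum + 1)).filter (fun j => j = maxPart p)) := by
      rw [← Finset.filter_or]
      apply Finset.filter_congr
      intro j _
      rw [hG j]
      by_cases hj : j = maxPart p
      · subst hj; rw [hcpb]; simp
      · rw [if_neg hj]; omega
    have hdisj : Disjoint ((Finset.range (p.sum + 1)).filter (fun j => 1 ≤ cfn p j))
        ((Finset.range (p.sum + 1)).filter (fun j => j = maxPart p)) := by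
      rw [Finset.disjoint_filter]
      intro x _ hx hx'
      rw [hx'] at hx
      omega
    rw [h1, Finset.card_union_of_disjoint hdisj]
    have h2 : (Finset.range (p.sum + 1)).filter (fun j => j = maxPart p) = {maxPart p} := by
      rw [Finset.filter_eq']
      rw [if_pos (Finset.mem_range.2 (by omega))]
    rw [h2, Finset.card_singleton]
    have h3 := dfn_filter_ext (q := p) (k := 1) (J := p.sum + 1) (by omega) (by omega)
    unfold dfn at h3
    omega
  have hdk : ∀ k, 2 ≤ k → dfn (pPlus p) k = dfn p k := by
    intro k hk
    unfold dfn
    rw [hsum]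
    have h1 : (Finset.range (p.sum + 1)).filter (fun j => k ≤ cfn (pPlus p) j)
        = (Finset.range (p.sum + 1)).filter (fun j => k ≤ cfn p j) := by
      apply Finset.filter_congr
      intro j _
      rw [hG j]
      by_cases hj : j = maxPart p
      · subst hj; rw [hcpb]; simp; omega
      · rw [if_neg hj]; omega
    rw [h1]
    have h3 := dfn_filter_ext (q := p) (k := k) (J := p.sum + 1) (by omega) (by omega)
    unfold dfn at h3
    omega
  apply Multiset.ext.2
  intro v
  rcases Nat.eq_zero_or_pos v with hv | hv
  · subst hv
    rw [Multiset.count_eq_zero_of_notMem (zero_not_mem_transpose _), Multiset.count_cons]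
    rw [if_neg (by omega), Multiset.count_eq_zero_of_notMem (zero_not_mem_transpose _)]
  · have e1 := dfn_eq_add_count_transpose (w := pPlus p) (u := v) (by omega)
    have e2 := dfn_eq_add_count_transpose (w := p) (u := v) (by omega)
    have e3 := dfn_eq_add_count_transpose (w := pPlus p) (u := v + 1) (by omega)
    have e4 := dfn_eq_add_count_transpose (w := p) (u := v + 1) (by omega)
    rw [Multiset.count_cons]
    rcases Nat.lt_or_ge v 2 with hv2 | hv2
    · have hv1 : v = 1 := by omega
      subst hv1
      have k1 := hd1
      have k2 := hdk 2 (by omega)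
      norm_num at e1 e2 e3 e4
      have k3 : dfn (pPlus p) 3 = dfn p 3 := hdk 3 (by omega)
      rw [if_pos rfl]
      omega
    · have k1 := hdk v (by omega)
      have k2 := hdk (v + 1) (by omega)
      rw [if_neg (by omega)]
      omega

lemma range_odd_even (n : ℕ) : Multiset.range (2 * n + 1)
    = 0 ::ₘ ((Multiset.range n).map (fun j => 2 * j + 1)
        + (Multiset.range n).map (fun j => 2 * j + 2)) := by
  induction n with
  | zero => simp
  | succ n ih =>
    have h1 : 2 * (n + 1) + 1 = (2 * n + 1) + 1 + 1 := by omega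
    rw [h1, Multiset.range_succ, Multiset.range_succ, ih, Multiset.range_succ]
    rw [Multiset.map_cons, Multiset.map_cons]
    have h2 : 2 * n + 1 + 1 = 2 * n + 2 := by omega
    rw [h2]
    ext a
    simp only [Multiset.count_cons, Multiset.count_add]
    omega

lemma sum_map_div2 (p : Multiset ℕ) : 2 * (p.map (fun a => a / 2)).sum ≤ p.sum := by
  induction p using Multiset.induction_on with
  | empty => simp
  | cons a s ih =>
    rw [Multiset.map_cons, Multiset.sum_cons, Multiset.sum_cons]
    omega

lemma cfn_cons (a : ℕ) (s : Multiset ℕ) (j : ℕ) :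
    cfn (a ::ₘ s) j = cfn s j + (if j + 1 ≤ a then 1 else 0) := by
  unfold cfn
  rw [Multiset.countP_cons]

lemma cfn_map_div2 (m : Multiset ℕ) (hmodd : ∀ a ∈ m, Odd a) (j : ℕ) :
    cfn (m.map (fun a => a / 2)) j = cfn m (2 * j + 1) := by
  unfold cfn
  rw [Multiset.countP_map, ← Multiset.countP_eq_card_filter]
  apply Multiset.countP_congr rfl
  intro a ha
  apply propext
  have h1 : j + 1 ≤ a / 2 ↔ (j + 1) * 2 ≤ a := Nat.le_div_iff_mul_le (by omega)
  obtain ⟨t, ht⟩ := hmodd a ha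
  omega

/-- The main multiset identity: under the hypotheses of the theorem,
`(p⁺)ᵗ = [card m + 1] ∪ p₁ ∪ p₁`. -/
lemma claimA {p m : Multiset ℕ} {b n : ℕ}
    (hpm : p = b ::ₘ m) (hPm : pPlus p = (b + 1) ::ₘ m) (h0m : 0 ∉ m)
    (hbe : Even b) (hble : ∀ a ∈ m, a ≤ b)
    (hmodd : ∀ a ∈ m, Odd a)
    (hsum : p.sum = 2 * n) :
    transpose (pPlus p) = (Multiset.card m + 1) ::ₘ (pOne p + pOne p) := by
  obtain ⟨t, hbt⟩ := hbe
  have hsum' : (pPlus p).sum = 2 * n + 1 := by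
    rw [hPm, Multiset.sum_cons]
    rw [hpm, Multiset.sum_cons] at hsum
    omega
  set h : Multiset ℕ := p.map (fun a => a / 2) with hh
  have hhc : h = (b / 2) ::ₘ m.map (fun a => a / 2) := by
    rw [hh, hpm, Multiset.map_cons]
  have F3 : ∀ j, cfn m (2 * j + 1) = cfn m (2 * j + 2) := by
    intro j
    unfold cfn
    apply Multiset.countP_congr rfl
    intro a ha
    apply propext
    obtain ⟨s, hs⟩ := hmodd a ha
    omega
  have F4a : ∀ j, cfn h j = cfn (pPlus p) (2 * j + 1) := by
    intro j
    rw [hhc, cfn_cons, cfn_map_div2 m hmodd, hPm, cfn_cons]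
    have h1 : (j + 1 ≤ b / 2) ↔ (2 * j + 1 + 1 ≤ b + 1) := by
      have h2 : j + 1 ≤ b / 2 ↔ (j + 1) * 2 ≤ b := Nat.le_div_iff_mul_le (by omega)
      omega
    congr 1
    rcases Nat.lt_or_ge (b / 2) (j + 1) with h' | h'
    · rw [if_neg (by omega), if_neg (by omega)]
    · rw [if_pos (by omega), if_pos (by omega)]
  have F4b : ∀ j, cfn h j = cfn (pPlus p) (2 * j + 2) := by
    intro j
    rw [F4a j, hPm, cfn_cons, cfn_cons, ← F3 j]
    congr 1
    rcases Nat.lt_or_ge b (2 * j + 1) with h' | h'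
    · rw [if_neg (by omega), if_neg (by omega)]
    · rw [if_pos (by omega), if_pos (by omega)]
  have F5 : cfn (pPlus p) 0 = Multiset.card m + 1 := by
    rw [hPm, cfn_cons, if_pos (by omega)]
    have : cfn m 0 = Multiset.card m := by
      unfold cfn
      rw [Multiset.countP_eq_card]
      intro a ha
      have : a ≠ 0 := fun hc => h0m (hc ▸ ha)
      omega
    omega
  have hhsum : h.sum ≤ n := by
    have := sum_map_div2 p
    rw [← hh] at this
    omega
  -- count bridge over ranges
  have hbridge : ∀ v, 1 ≤ v →
      Multiset.count v ((Multiset.range n).map (cfn h))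
        = Multiset.count v ((Multiset.range h.sum).map (cfn h)) := by
    intro v hv
    have hr : Multiset.range n
        = Multiset.range h.sum + (Multiset.range (n - h.sum)).map (h.sum + ·) := by
      have := Multiset.range_add h.sum (n - h.sum)
      rw [show h.sum + (n - h.sum) = n from by omega] at this
      exact this
    rw [hr, Multiset.map_add, Multiset.count_add, Multiset.map_map]
    have : Multiset.count v ((Multiset.range (n - h.sum)).map (cfn h ∘ (h.sum + ·))) = 0 := by
      rw [Multiset.count_eq_zero]
      intro hc
      obtain ⟨i, _, hi⟩ := Multiset.mem_map.1 hc
      have : cfn h (h.sum + i) = 0 := cfn_eq_zero_of_le (by omega)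
      simp only [Function.comp] at hi
      omega
    omega
  apply Multiset.ext.2
  intro v
  rcases Nat.eq_zero_or_pos v with hv | hv
  · subst hv
    have z1 : Multiset.count 0 (transpose (pPlus p)) = 0 :=
      Multiset.count_eq_zero_of_notMem (zero_not_mem_transpose _)
    have z2 : Multiset.count 0 (pOne p) = 0 := by
      unfold pOne
      exact Multiset.count_eq_zero_of_notMem (zero_not_mem_transpose _)
    rw [z1, Multiset.count_cons, if_neg (by omega), Multiset.count_add, z2]
  · -- LHS
    have hL : Multiset.count v (transpose (pPlus p))
        = Multiset.count v (((Multiset.range (2 * n + 1)).map (cfn (pPlus p)))) := by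
      unfold transpose
      rw [hsum', Multiset.count_filter_of_pos (by omega)]
      rfl

    rw [hL, range_odd_even, Multiset.map_cons, Multiset.count_cons, Multiset.map_add,
      Multiset.count_add, Multiset.map_map, Multiset.map_map]
    have hm1 : (Multiset.range n).map (cfn (pPlus p) ∘ (fun j => 2 * j + 1))
        = (Multiset.range n).map (cfn h) := by
      apply Multiset.map_congr rfl
      intro j _
      exact (F4a j).symm
    have hm2 : (Multiset.range n).map (cfn (pPlus p) ∘ (fun j => 2 * j + 2))
        = (Multiset.range n).map (cfn h) := by
      apply Multiset.map_congr rfl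
      intro j _
      exact (F4b j).symm
    rw [hm1, hm2, hbridge v (by omega)]
    -- RHS
    have hR : Multiset.count v (pOne p) = Multiset.count v ((Multiset.range h.sum).map (cfn h)) := by
      unfold pOne transpose
      rw [← hh, Multiset.count_filter_of_pos (by omega)]
      rfl

    rw [Multiset.count_cons, Multiset.count_add, hR, F5]

/-- All parts of `(p⁺)ᵗ` are odd. -/
lemma claimC {p m : Multiset ℕ} {b : ℕ}
    (hPm : pPlus p = (b + 1) ::ₘ m) (h0m : 0 ∉ m)
    (hbe : Even b) (hble : ∀ a ∈ m, a ≤ b)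
    (hmeven : ∀ a, Even (m.count a)) :
    ∀ a ∈ transpose (pPlus p), Odd a := by
  intro a ha
  unfold transpose at ha
  rw [Multiset.mem_filter] at ha
  obtain ⟨ha1, ha2⟩ := ha
  obtain ⟨j, _, hj0⟩ := Multiset.mem_map.1 ha1
  have hj : cfn (pPlus p) j = a := hj0
  have hF2 : Even (cfn m j) := by
    apply even_countP_of_counts
    intro x _
    exact hmeven x
  rw [hPm, cfn_cons] at hj
  obtain ⟨t, hbt⟩ := hbe
  rcases Nat.lt_or_ge b j with h' | h'
  · -- j > b : part is zero, contradiction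
    have : cfn m j = 0 := by
      unfold cfn
      rw [Multiset.countP_eq_zero]
      intro x hx
      have := hble x hx
      omega
    rw [this, if_neg (by omega)] at hj
    omega
  · rw [if_pos (by omega)] at hj
    obtain ⟨u, hu⟩ := hF2
    exact ⟨u, by omega⟩

lemma orth_collapse_eval {N : ℕ} {p q : Multiset ℕ} (h : IsCollapseOf IsOrthogonal N p q) :
    orthCollapse N p = q := by
  unfold orthCollapse
  exact collapse_eval h

lemma orth_expansion_eval {N : ℕ} {p q : Multiset ℕ}
    (h : IsExpansionOf IsOrthogonal (IsSpecialOrth N) N p q) : orthExpansion N p = q := by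
  unfold orthExpansion
  exact expansion_eval h


/-- Theorem 4.2(2)(i): let `p` be a symplectic partition of `2n` whose
largest part is even and occurs with multiplicity `1`, all of whose other parts are odd.
Then `([p₁ p₁ (2n*+1)]^t)_{SO_{2n+1}} = (p^+)_{SO_{2n+1}}`, and consequently
`[p₁ p₁ (2n*+1)]^{SO_{2n+1}} = ((p^t)^+)_{SO_{2n+1}}`. -/
theorem criterion_so_odd_case_i (n : ℕ) (hn : 1 ≤ n) (p : Multiset ℕ)
    (hp : IsPartitionOf (2 * n) p) (hsymp : IsSymplectic p)
    (hmax_even : Even (maxPart p)) (hmax_mult : p.count (maxPart p) = 1)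
    (hodd : ∀ a ∈ p, a ≠ maxPart p → Odd a) :
    orthCollapse (2 * n + 1) (transpose (qqm (pOne p) (2 * nStar p + 1))) =
        orthCollapse (2 * n + 1) (pPlus p) ∧
      orthExpansion (2 * n + 1) (qqm (pOne p) (2 * nStar p + 1)) =
        orthCollapse (2 * n + 1) (pPlus (transpose p)) := by
  obtain ⟨hpsum, hp0mem⟩ := hp
  have hpne : p ≠ 0 := by
    intro hc
    rw [hc] at hpsum
    simp at hpsum
    omega
  have hb : maxPart p ∈ p := maxPart_mem hpne hp0mem
  set m := p.erase (maxPart p) with hmdef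
  have hpm : p = maxPart p ::ₘ m := (Multiset.cons_erase hb).symm
  have hPm : pPlus p = (maxPart p + 1) ::ₘ m := rfl
  have h0m : 0 ∉ m := fun hc => hp0mem (Multiset.mem_of_mem_erase hc)
  have hble : ∀ a ∈ m, a ≤ maxPart p := fun a ha => le_maxPart (Multiset.mem_of_mem_erase ha)
  have hbnotm : maxPart p ∉ m := by
    rw [← Multiset.count_eq_zero, hmdef, Multiset.count_erase_self, hmax_mult]
  have hmodd : ∀ a ∈ m, Odd a := by
    intro a ha
    apply hodd a (Multiset.mem_of_mem_erase ha)
    intro hc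
    exact hbnotm (hc ▸ ha)
  have hmeven : ∀ a, Even (m.count a) := by
    intro a
    by_cases ham : a ∈ m
    · have hao : Odd a := hmodd a ham
      have hane : a ≠ maxPart p := by
        intro hc
        rw [hc] at hao
        exact (Nat.not_odd_iff_even.symm.1 hmax_even) hao
      rw [hmdef, Multiset.count_erase_of_ne hane]
      exact hsymp a hao
    · rw [Multiset.count_eq_zero_of_notMem ham]
      exact Even.zero
  have hA : transpose (pPlus p) = (Multiset.card m + 1) ::ₘ (pOne p + pOne p) :=
    claimA hpm hPm h0m hmax_even hble hmodd hpsum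
  have hB : transpose (pPlus p) = 1 ::ₘ transpose p := transpose_pPlus hpne hp0mem
  have hC : ∀ a ∈ transpose (pPlus p), Odd a := claimC hPm h0m hmax_even hble hmeven
  have hcardm : 2 * nStar p = Multiset.card m := by
    unfold nStar
    have h1 : p.countP (Odd ·) = Multiset.card m := by
      conv_lhs => rw [hpm]
      rw [Multiset.countP_cons, if_neg (Nat.not_odd_iff_even.symm.1 hmax_even),
        Multiset.countP_eq_card.2 hmodd]
      omega
    have h2 := sum_mod_countP_odd m
    have h3 : m.countP (fun a => Odd a) = Multiset.card m := Multiset.countP_eq_card.2 hmodd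
    have h4 : p.sum = maxPart p + m.sum := by
      conv_lhs => rw [hpm]
      rw [Multiset.sum_cons]
    obtain ⟨t, ht⟩ := hmax_even
    rw [h1]
    omega
  have hqqm : qqm (pOne p) (2 * nStar p + 1) = transpose (pPlus p) := by
    unfold qqm
    rw [if_neg (by omega), hA, hcardm]
  have h0P : 0 ∉ pPlus p := zero_not_mem_pPlus hp0mem
  have hTT : transpose (transpose (pPlus p)) = pPlus p := transpose_transpose h0P
  have hr_sum : (transpose (pPlus p)).sum = 2 * n + 1 := by
    rw [sum_transpose, sum_pPlus hb, hpsum]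
  have hr_part : IsPartitionOf (2 * n + 1) (transpose (pPlus p)) :=
    ⟨hr_sum, zero_not_mem_transpose _⟩
  have hr_orth : IsOrthogonal (transpose (pPlus p)) := by
    intro a hae
    have : a ∉ transpose (pPlus p) := fun hc => (Nat.not_odd_iff_even.symm.1 hae) (hC a hc)
    rw [Multiset.count_eq_zero_of_notMem this]
    exact Even.zero
  have hP_orth : IsOrthogonal (pPlus p) := by
    intro a hae
    have : a ∉ pPlus p := by
      intro hc
      rw [hPm, Multiset.mem_cons] at hc
      rcases hc with hc | hc
      · subst hc
        obtain ⟨t, ht⟩ := hmax_even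
        obtain ⟨u, hu⟩ := hae
        omega
      · exact (Nat.not_odd_iff_even.symm.1 hae) (hmodd a hc)
    rw [Multiset.count_eq_zero_of_notMem this]
    exact Even.zero
  have hP_part : IsPartitionOf (2 * n + 1) (pPlus p) := ⟨by rw [sum_pPlus hb, hpsum], h0P⟩
  have hcolP : orthCollapse (2 * n + 1) (pPlus p) = pPlus p :=
    orth_collapse_eval (self_collapse hP_part hP_orth)
  have hcolr : orthCollapse (2 * n + 1) (transpose (pPlus p)) = transpose (pPlus p) :=
    orth_collapse_eval (self_collapse hr_part hr_orth)
  have hr_special : IsSpecialOrth (2 * n + 1) (transpose (pPlus p)) := by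
    unfold IsSpecialOrth
    rw [hTT, hcolP, hcolr]
  constructor
  · rw [hqqm, hTT]
  · rw [hqqm]
    have hexp : orthExpansion (2 * n + 1) (transpose (pPlus p)) = transpose (pPlus p) :=
      orth_expansion_eval (self_expansion hr_part hr_orth hr_special)
    have hw0 : (0 : ℕ) ∉ transpose p := zero_not_mem_transpose p
    have hwne : transpose p ≠ 0 := by
      intro hc
      have h1 := sum_transpose p
      rw [hc] at h1
      simp at h1
      omega
    have hdom1 : DomLE (transpose (pPlus p)) (pPlus (transpose p)) := by
      intro k
      rw [hB]
      exact psum_cons_one_le_pPlus hwne hw0 k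
    have hmaximal : ∀ q', IsPartitionOf (2 * n + 1) q' → IsOrthogonal q' →
        DomLE q' (pPlus (transpose p)) → DomLE q' (transpose (pPlus p)) := by
      intro q' hq'p hq'o hq'le
      apply star_lemma hC hq'o (by rw [hq'p.1, hr_sum])
      intro k
      have h1 := hq'le k
      have h2 := psum_pPlus_le_cons_one hwne hw0 k
      rw [← hB] at h2
      omega
    have hcol2 : orthCollapse (2 * n + 1) (pPlus (transpose p)) = transpose (pPlus p) :=
      orth_collapse_eval ⟨hr_part, hr_orth, hdom1, hmaximal⟩
    rw [hexp, hcol2]
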